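/- Under the setting of the previous statement, if additionally F(x) − min_{u∈X} F(u) ≤ ε, then ‖x⁺ − x‖²/γ² ≤ 2H_F(1 + H_F)·ε^{2ν/(1+ν)}. -/

import Mathlib

open scoped RealInnerProductSpace

set_option maxHeartbeats 1000000 in
/-- Under the setting of the projected-gradient step with `(H_F, ν)`-Hölder smooth `F`,
if additionally `F(x) - min_{u ∈ X} F(u) ≤ ε`, then
`‖x⁺ - x‖²/γ² ≤ 2 H_F (1 + H_F) ε^{2ν/(1+ν)}`. -/
theorem stmt_13 (n : ℕ) (X : Set (EuclideanSpace ℝ (Fin n)))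
    (hXc : Convex ℝ X) (hXcl : IsClosed X)
    (F : EuclideanSpace ℝ (Fin n) → ℝ) (g : EuclideanSpace ℝ (Fin n) → EuclideanSpace ℝ (Fin n))
    (HF ν ε : ℝ) (hHF : 0 < HF) (hν : ν ∈ Set.Ioc (0 : ℝ) 1) (hε : 0 < ε)
    (hgrad : ∀ x ∈ X, HasGradientAt F (g x) x)
    (hhold : ∀ x ∈ X, ∀ x' ∈ X, ‖g x' - g x‖ ≤ HF * ‖x' - x‖ ^ ν)
    (γ : ℝ) (hγ : γ = (1 / HF) * ε ^ ((1 - ν) / (1 + ν)))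
    (x xp : EuclideanSpace ℝ (Fin n)) (hx : x ∈ X) (hxp : xp ∈ X)
    (hmin : ∀ u ∈ X,
      ⟪g x, xp - x⟫ + (1 / (2 * γ)) * ‖xp - x‖ ^ 2 ≤
        ⟪g x, u - x⟫ + (1 / (2 * γ)) * ‖u - x‖ ^ 2)
    (hsub : ∀ u ∈ X, F x - F u ≤ ε) :
    ‖xp - x‖ ^ 2 / γ ^ 2 ≤ 2 * HF * (1 + HF) * ε ^ (2 * ν / (1 + ν)) := by
  obtain ⟨hν0, hν1⟩ := hν
  have h1ν : (0:ℝ) < 1 + ν := by linarith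
  have hεα : 0 < ε ^ ((1 - ν) / (1 + ν)) := Real.rpow_pos_of_pos hε _
  have hγpos : 0 < γ := by rw [hγ]; positivity
  have hεr : 0 < ε ^ (2 * ν / (1 + ν)) := Real.rpow_pos_of_pos hε _
  by_cases hd0 : xp = x
  · subst hd0
    simp only [sub_self, norm_zero]
    rw [show ((0:ℝ) ^ 2 / γ ^ 2) = 0 by norm_num]
    positivity
  set d : EuclideanSpace ℝ (Fin n) := xp - x with hd
  have htd : 0 < ‖d‖ := by
    rw [norm_pos_iff, hd, sub_ne_zero]; exact hd0
  set N : ℝ := ‖d‖ ^ 2 with hN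
  have hNpos : 0 < N := by positivity
  -- membership of the segment
  have hc : ∀ t ∈ Set.Icc (0:ℝ) 1, x + t • d ∈ X := by
    intro t ht
    have hmem := hXc hx hxp (by linarith [ht.2] : (0:ℝ) ≤ 1 - t) ht.1 (by ring)
    have : (1 - t) • x + t • xp = x + t • d := by rw [hd]; module
    rwa [this] at hmem
  -- derivative along the segment
  have hφ : ∀ t ∈ Set.Icc (0:ℝ) 1,
      HasDerivAt (fun s : ℝ => F (x + s • d)) ⟪g (x + t • d), d⟫ t := by
    intro t ht
    have h1 : HasDerivAt (fun s : ℝ => x + s • d) d t := by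
      simpa using ((hasDerivAt_id t).smul_const d).const_add x
    have h2 := (hgrad _ (hc t ht)).hasFDerivAt
    have h3 := h2.comp_hasDerivAt t h1
    simp only [InnerProductSpace.toDual_apply_apply] at h3
    exact h3
  -- the auxiliary function
  set ψ : ℝ → ℝ := fun t =>
    HF * ‖d‖ ^ (1 + ν) * t ^ (1 + ν) / (1 + ν) - (F (x + t • d) - t * ⟪g x, d⟫) with hψ
  have hψcont : ContinuousOn ψ (Set.Icc 0 1) := by
    intro t ht
    have h1 : ContinuousAt (fun t : ℝ => t ^ (1 + ν)) t :=
      Real.continuousAt_rpow_const t _ (Or.inr h1ν.le)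
    have h2 : ContinuousAt (fun s : ℝ => F (x + s • d)) t := (hφ t ht).continuousAt
    exact (((continuousAt_const.mul h1).div_const _).sub
      (h2.sub (continuousAt_id.mul continuousAt_const))).continuousWithinAt
  have hψderiv : ∀ t ∈ Set.Ioo (0:ℝ) 1, HasDerivAt ψ
      (HF * ‖d‖ ^ (1 + ν) * ((1 + ν) * t ^ (1 + ν - 1)) / (1 + ν) -
        (⟪g (x + t • d), d⟫ - 1 * ⟪g x, d⟫)) t := by
    intro t ht
    have hpow : HasDerivAt (fun s : ℝ => s ^ (1 + ν)) ((1 + ν) * t ^ (1 + ν - 1)) t :=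
      Real.hasDerivAt_rpow_const (Or.inl ht.1.ne')
    have hlin : HasDerivAt (fun s : ℝ => s * ⟪g x, d⟫) (1 * ⟪g x, d⟫) t :=
      (hasDerivAt_id t).mul_const _
    exact ((hpow.const_mul (HF * ‖d‖ ^ (1 + ν))).div_const (1 + ν)).sub
      ((hφ t (Set.mem_Icc_of_Ioo ht)).sub hlin)
  have hψmono : MonotoneOn ψ (Set.Icc 0 1) := by
    apply monotoneOn_of_deriv_nonneg (convex_Icc 0 1) hψcont
    · intro t ht
      rw [interior_Icc] at ht
      exact ((hψderiv t ht).differentiableAt).differentiableWithinAt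
    · intro t ht
      rw [interior_Icc] at ht
      rw [(hψderiv t ht).deriv]
      have hexp : 1 + ν - 1 = ν := by ring
      rw [hexp]
      have hb : ⟪g (x + t • d), d⟫ - 1 * ⟪g x, d⟫ ≤ HF * ‖d‖ ^ (1 + ν) * t ^ ν := by
        have hib : ⟪g (x + t • d), d⟫ - 1 * ⟪g x, d⟫ = ⟪g (x + t • d) - g x, d⟫ := by
          rw [inner_sub_left]; ring
        rw [hib]
        calc ⟪g (x + t • d) - g x, d⟫ ≤ ‖g (x + t • d) - g x‖ * ‖d‖ := real_inner_le_norm _ _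
          _ ≤ (HF * ‖x + t • d - x‖ ^ ν) * ‖d‖ := by
              have := hhold x hx (x + t • d) (hc t (Set.mem_Icc_of_Ioo ht))
              exact mul_le_mul_of_nonneg_right this (norm_nonneg _)
          _ = HF * ‖d‖ ^ (1 + ν) * t ^ ν := by
              have h1 : ‖x + t • d - x‖ = t * ‖d‖ := by
                rw [add_sub_cancel_left, norm_smul, Real.norm_eq_abs, abs_of_pos ht.1]
              rw [h1, Real.mul_rpow ht.1.le (norm_nonneg d)]
              rw [show (1 + ν) = ν + 1 by ring, Real.rpow_add htd, Real.rpow_one]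
              ring
      have heq : HF * ‖d‖ ^ (1 + ν) * ((1 + ν) * t ^ ν) / (1 + ν)
          = HF * ‖d‖ ^ (1 + ν) * t ^ ν := by
        field_simp
      rw [heq]
      linarith [hb]
  -- descent lemma
  have hA : F xp - F x - ⟪g x, d⟫ ≤ HF * ‖d‖ ^ (1 + ν) / (1 + ν) := by
    have h01 : ψ 0 ≤ ψ 1 :=
      hψmono (Set.left_mem_Icc.mpr zero_le_one) (Set.right_mem_Icc.mpr zero_le_one) zero_le_one
    have hx1 : x + (1:ℝ) • d = xp := by rw [hd]; module
    have hx0 : x + (0:ℝ) • d = x := by module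
    rw [hψ] at h01
    simp only [hx1, hx0, Real.zero_rpow h1ν.ne', Real.one_rpow, one_mul, zero_mul,
      mul_zero, mul_one, zero_div, sub_zero, zero_sub] at h01
    linarith [h01]
  -- strong optimality from hmin
  have hB : ⟪g x, d⟫ + (1 / γ) * N ≤ 0 := by
    apply le_of_forall_pos_le_add
    intro δ hδ
    obtain ⟨s, hs0, hs1, hsle⟩ : ∃ s : ℝ, 0 < s ∧ s ≤ 1 ∧ s * N ≤ 2 * γ * δ := by
      refine ⟨min 1 (2 * γ * δ / N), lt_min one_pos (by positivity), min_le_left _ _, ?_⟩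
      have hle : min 1 (2 * γ * δ / N) ≤ 2 * γ * δ / N := min_le_right _ _
      calc min 1 (2 * γ * δ / N) * N ≤ (2 * γ * δ / N) * N :=
            mul_le_mul_of_nonneg_right hle hNpos.le
        _ = 2 * γ * δ := by field_simp
    have hu : xp + s • (x - xp) ∈ X := by
      have hmem := hXc hxp hx (by linarith : (0:ℝ) ≤ 1 - s) hs0.le (by ring)
      have : (1 - s) • xp + s • x = xp + s • (x - xp) := by module
      rwa [this] at hmem
    have hkey := hmin _ hu
    have huxd : xp + s • (x - xp) - x = (1 - s) • d := by rw [hd]; module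
    rw [huxd, real_inner_smul_right, norm_smul, mul_pow] at hkey
    have hns : ‖(1:ℝ) - s‖ ^ 2 = (1 - s) ^ 2 := by
      rw [Real.norm_eq_abs, sq_abs]
    rw [hns, ← hN] at hkey
    obtain ⟨cc, hcpos, hcdef, hγc⟩ : ∃ cc : ℝ, 0 < cc ∧ 1 / (2 * γ) = cc ∧ 1 / γ = 2 * cc := by
      refine ⟨1 / (2 * γ), by positivity, rfl, by field_simp⟩
    rw [hcdef] at hkey
    rw [hγc]
    have hcs : cc * (s * N) ≤ δ := by
      calc cc * (s * N) ≤ cc * (2 * γ * δ) := mul_le_mul_of_nonneg_left hsle hcpos.le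
        _ = δ := by rw [← hcdef]; field_simp
    -- hkey : ⟪g x, d⟫ + c * N ≤ (1-s) * ⟪g x, d⟫ + c * ((1-s)^2 * N)
    have h2 : s * ⟪g x, d⟫ ≤ s * (cc * (s - 2) * N) := by nlinarith [hkey]
    have h3 : ⟪g x, d⟫ ≤ cc * (s - 2) * N := le_of_mul_le_mul_left h2 hs0
    nlinarith [h3, hcs]
  -- AM-GM step
  set w : ℝ := (1 + ν) / 2 with hw
  set α : ℝ := (1 - ν) / (1 + ν) with hα
  have hamgm : ‖d‖ ^ (1 + ν) ≤ w * (ε ^ (-α) * N) + (1 - w) * ε := by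
    have hεneg : (0:ℝ) ≤ ε ^ (-α) := (Real.rpow_pos_of_pos hε _).le
    have h := Real.geom_mean_le_arith_mean2_weighted (by positivity : (0:ℝ) ≤ w)
      (by rw [hw]; linarith : (0:ℝ) ≤ 1 - w) (by positivity : (0:ℝ) ≤ ε ^ (-α) * N)
      hε.le (by ring : w + (1 - w) = 1)
    have hLHS : (ε ^ (-α) * N) ^ w * ε ^ (1 - w) = ‖d‖ ^ (1 + ν) := by
      have e1 : (ε ^ (-α)) ^ w = ε ^ (-α * w) := (Real.rpow_mul hε.le _ _).symm
      have e2 : N ^ w = ‖d‖ ^ (1 + ν) := by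
        rw [hN, ← Real.rpow_natCast ‖d‖ 2, ← Real.rpow_mul (norm_nonneg d),
          show ((2:ℕ):ℝ) * w = 1 + ν by push_cast; rw [hw]; ring]
      have e3 : ε ^ (-α * w) * ε ^ (1 - w) = 1 := by
        rw [← Real.rpow_add hε,
          show -α * w + (1 - w) = 0 by rw [hα, hw]; field_simp; ring,
          Real.rpow_zero]
      rw [Real.mul_rpow hεneg hNpos.le, e1, e2,
        show ε ^ (-α * w) * ‖d‖ ^ (1 + ν) * ε ^ (1 - w)
          = ε ^ (-α * w) * ε ^ (1 - w) * ‖d‖ ^ (1 + ν) by ring, e3, one_mul]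
    rw [hLHS] at h
    exact h
  -- final chain
  have hPpos : 0 < ε ^ (-α) := Real.rpow_pos_of_pos hε _
  have hinvγ : 1 / γ = HF * ε ^ (-α) := by
    rw [hγ, hα, Real.rpow_neg hε.le]
    field_simp
  have hsubxp := hsub xp hxp
  have t1 : HF / (1 + ν) * w = HF / 2 := by rw [hw]; field_simp
  have t2 : HF / (1 + ν) * (1 - w) ≤ HF / 2 := by
    have e : HF / (1 + ν) * (1 - w) = HF * (1 - ν) / (2 * (1 + ν)) := by
      rw [hw]; field_simp; ring
    rw [e, div_le_div_iff₀ (by positivity) two_pos]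
    nlinarith
  have hamgm2 : HF / (1 + ν) * ‖d‖ ^ (1 + ν) ≤
      HF / 2 * (ε ^ (-α) * N) + HF / 2 * ε := by
    have h := mul_le_mul_of_nonneg_left hamgm (by positivity : (0:ℝ) ≤ HF / (1 + ν))
    have h2 : HF / (1 + ν) * (1 - w) * ε ≤ HF / 2 * ε :=
      mul_le_mul_of_nonneg_right t2 hε.le
    calc HF / (1 + ν) * ‖d‖ ^ (1 + ν)
        ≤ HF / (1 + ν) * (w * (ε ^ (-α) * N) + (1 - w) * ε) := h
      _ = HF / (1 + ν) * w * (ε ^ (-α) * N) + HF / (1 + ν) * (1 - w) * ε := by ring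
      _ ≤ HF / 2 * (ε ^ (-α) * N) + HF / 2 * ε := by
          rw [t1]
          exact add_le_add le_rfl h2
  have h5 : (1 / γ) * N ≤ (2 + HF) * ε := by
    have hA' : -⟪g x, d⟫ ≤ ε + HF / (1 + ν) * ‖d‖ ^ (1 + ν) := by
      have : HF * ‖d‖ ^ (1 + ν) / (1 + ν) = HF / (1 + ν) * ‖d‖ ^ (1 + ν) := by ring
      linarith [hA, hsubxp, this ▸ hA]
    have hB' : (1 / γ) * N ≤ -⟪g x, d⟫ := by linarith [hB]
    have hPN : (1 / γ) * N = HF * (ε ^ (-α) * N) := by rw [hinvγ]; ring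
    nlinarith [hA', hB', hamgm2, hPN]
  have h6 : N / γ ^ 2 ≤ (1 / γ) * ((2 + HF) * ε) := by
    have e : N / γ ^ 2 = (1 / γ) * ((1 / γ) * N) := by
      rw [div_eq_iff (by positivity : (γ:ℝ) ^ 2 ≠ 0)]
      field_simp
    rw [e]
    exact mul_le_mul_of_nonneg_left h5 (by positivity)
  have hPe : ε ^ (-α) * ε = ε ^ (1 - α) := by
    nth_rewrite 2 [← Real.rpow_one ε]
    rw [← Real.rpow_add hε]
    ring_nf
  have hexp2 : 2 * ν / (1 + ν) = 1 - α := by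
    rw [hα]; field_simp; ring
  have h7 : (1 / γ) * ((2 + HF) * ε) = HF * (2 + HF) * ε ^ (1 - α) := by
    rw [hinvγ, ← hPe]; ring
  rw [hexp2]
  have h8 : HF * (2 + HF) * ε ^ (1 - α) ≤ 2 * HF * (1 + HF) * ε ^ (1 - α) := by
    have hp : 0 < ε ^ (1 - α) := Real.rpow_pos_of_pos hε _
    nlinarith [hp, sq_nonneg HF, mul_pos (mul_pos hHF hHF) hp]
  calc N / γ ^ 2 ≤ (1 / γ) * ((2 + HF) * ε) := h6
    _ = HF * (2 + HF) * ε ^ (1 - α) := h7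
    _ ≤ 2 * HF * (1 + HF) * ε ^ (1 - α) := h8
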